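/- arXiv:2409.12947 — 2 statements merged into one kernel-verified Lean document; each statement's English description precedes it below -/
import Mathlib

section
/- (Tweedie's formula) Let X be a real random variable with density bounded appropriately, Z ~ N(0,1) independent of X, and τ > 0. Let p(·; τ) denote the density of X + τZ. Then for all y, E[X | X + τZ = y] = y + τ² · ∂_y log p(y; τ). -/
open MeasureTheory ProbabilityTheory
open scoped NNReal ENNReal Real


noncomputable def K (τ y x : ℝ) : ℝ :=
  (Real.sqrt (2 * Real.pi * τ ^ 2))⁻¹ * Real.exp (-(y - x) ^ 2 / (2 * τ ^ 2))

lemma K_eq (τ y x : ℝ) : K τ y x = gaussianPDFReal x ⟨τ^2, sq_nonneg τ⟩ y := rfl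

lemma K_nonneg (τ y x : ℝ) : 0 ≤ K τ y x := by
  unfold K; positivity

lemma K_le (τ y x : ℝ) : ‖K τ y x‖ ≤ (Real.sqrt (2 * Real.pi * τ ^ 2))⁻¹ := by
  rw [Real.norm_of_nonneg (K_nonneg τ y x)]
  unfold K
  have h1 : Real.exp (-(y - x) ^ 2 / (2 * τ ^ 2)) ≤ 1 := by
    rw [Real.exp_le_one_iff]
    by_cases h : τ = 0
    · simp [h]
    · exact div_nonpos_iff.2 (Or.inr ⟨neg_nonpos.2 (sq_nonneg _), by positivity⟩)
  calc (Real.sqrt (2 * Real.pi * τ ^ 2))⁻¹ * Real.exp (-(y - x) ^ 2 / (2 * τ ^ 2))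
      ≤ (Real.sqrt (2 * Real.pi * τ ^ 2))⁻¹ * 1 := by
        apply mul_le_mul_of_nonneg_left h1; positivity
    _ = _ := mul_one _

lemma abs_mul_exp_le {τ : ℝ} (hτ : 0 < τ) (u : ℝ) :
    |u| * Real.exp (-u ^ 2 / (2 * τ ^ 2)) ≤ 2 * τ := by
  rcases le_or_gt |u| (2 * τ) with h | h
  · have h1 : Real.exp (-u ^ 2 / (2 * τ ^ 2)) ≤ 1 := by
      rw [Real.exp_le_one_iff]
      exact div_nonpos_iff.2 (Or.inr ⟨neg_nonpos.2 (sq_nonneg _), by positivity⟩)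
    calc |u| * Real.exp (-u ^ 2 / (2 * τ ^ 2)) ≤ |u| * 1 :=
          mul_le_mul_of_nonneg_left h1 (abs_nonneg u)
      _ ≤ 2 * τ := by simpa using h
  · have hu : 0 < |u| := lt_trans (by positivity) h
    have key : |u| / (2 * τ) ≤ Real.exp (u ^ 2 / (2 * τ ^ 2)) := by
      have h1 : u ^ 2 / (2 * τ ^ 2) ≤ Real.exp (u ^ 2 / (2 * τ ^ 2)) :=
        le_trans (by linarith [Real.add_one_le_exp (u ^ 2 / (2 * τ ^ 2))]) le_rfl
      refine le_trans ?_ h1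
      rw [div_le_div_iff₀ (by positivity) (by positivity)]
      have : |u| ^ 2 = u ^ 2 := sq_abs u
      nlinarith [sq_abs u, sq_nonneg (|u| - 2 * τ)]
    have h2 : Real.exp (-u ^ 2 / (2 * τ ^ 2)) ≤ 2 * τ / |u| := by
      rw [neg_div, Real.exp_neg]
      rw [inv_le_comm₀ (Real.exp_pos _) (by positivity)] at *
      calc (2 * τ / |u|)⁻¹ = |u| / (2 * τ) := by rw [inv_div]
        _ ≤ Real.exp (u ^ 2 / (2 * τ ^ 2)) := key
    calc |u| * Real.exp (-u ^ 2 / (2 * τ ^ 2)) ≤ |u| * (2 * τ / |u|) :=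
        mul_le_mul_of_nonneg_left h2 (abs_nonneg u)
      _ = 2 * τ := by field_simp

lemma K'_bound {τ : ℝ} (hτ : 0 < τ) (y x : ℝ) :
    ‖(x - y) / τ ^ 2 * K τ y x‖ ≤ (Real.sqrt (2 * Real.pi * τ ^ 2))⁻¹ * (2 / τ) := by
  have h := abs_mul_exp_le hτ (y - x)
  rw [norm_mul, Real.norm_of_nonneg (K_nonneg τ y x)]
  unfold K
  have habs : ‖(x - y) / τ ^ 2‖ = |y - x| / τ ^ 2 := by
    rw [Real.norm_eq_abs, abs_div, abs_of_pos (by positivity : (0:ℝ) < τ ^ 2), abs_sub_comm]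
  rw [habs]
  have hB : (0:ℝ) < Real.sqrt (2 * Real.pi * τ ^ 2) := by
    apply Real.sqrt_pos.2; positivity
  calc |y - x| / τ ^ 2 * ((Real.sqrt (2 * Real.pi * τ ^ 2))⁻¹ * Real.exp (-(y - x) ^ 2 / (2 * τ ^ 2)))
      = (Real.sqrt (2 * Real.pi * τ ^ 2))⁻¹ * (|y - x| * Real.exp (-(y - x) ^ 2 / (2 * τ ^ 2)) / τ ^ 2) := by
        ring
    _ ≤ (Real.sqrt (2 * Real.pi * τ ^ 2))⁻¹ * (2 * τ / τ ^ 2) := by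
        apply mul_le_mul_of_nonneg_left _ (by positivity)
        apply div_le_div_of_nonneg_right h (by positivity) |>.trans le_rfl
    _ = (Real.sqrt (2 * Real.pi * τ ^ 2))⁻¹ * (2 / τ) := by
        rw [mul_div_assoc]; congr 1; field_simp

lemma hasDerivAt_K {τ : ℝ} (hτ : 0 < τ) (x y : ℝ) :
    HasDerivAt (fun t => K τ t x) ((x - y) / τ ^ 2 * K τ y x) y := by
  have hτ2 : (τ:ℝ) ^ 2 ≠ 0 := by positivity
  have h1 : HasDerivAt (fun t : ℝ => -(t - x) ^ 2 / (2 * τ ^ 2))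
      (-(2 * (y - x)) / (2 * τ ^ 2)) y := by
    have : HasDerivAt (fun t : ℝ => (t - x) ^ 2) (2 * (y - x)) y := by
      have h := ((hasDerivAt_id y).sub_const x).pow 2
      simp at h
      exact h
    simpa [neg_div] using (this.neg.div_const (2 * τ ^ 2))
  have h2 := (h1.exp).const_mul (Real.sqrt (2 * Real.pi * τ ^ 2))⁻¹
  refine h2.congr_deriv ?_
  unfold K
  field_simp
  ring

lemma integrable_K_volume {τ : ℝ} (hτ : 0 < τ) (x : ℝ) :
    Integrable (fun y => K τ y x) volume := by
  simp_rw [K_eq]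
  exact integrable_gaussianPDFReal x _

lemma Vne {τ : ℝ} (hτ : 0 < τ) : (⟨τ^2, sq_nonneg τ⟩ : NNReal) ≠ 0 := by
  intro h
  have : τ ^ 2 = 0 := congrArg NNReal.toReal h
  exact (by positivity : τ ^ 2 ≠ 0) this

lemma integral_K_volume {τ : ℝ} (hτ : 0 < τ) (x : ℝ) :
    ∫ y, K τ y x ∂volume = 1 := by
  simp_rw [K_eq]
  exact integral_gaussianPDFReal_eq_one x (Vne hτ)

lemma continuous_K (τ : ℝ) : Continuous (fun q : ℝ × ℝ => K τ q.1 q.2) := by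
  unfold K
  fun_prop

lemma continuous_K2 (τ y : ℝ) : Continuous (fun x => K τ y x) := by
  unfold K; fun_prop

lemma continuous_K1 (τ x : ℝ) : Continuous (fun y => K τ y x) := by
  unfold K; fun_prop

lemma continuous_K'2 (τ y : ℝ) : Continuous (fun x => (x - y) / τ ^ 2 * K τ y x) := by
  unfold K; fun_prop

lemma measurable_K (τ : ℝ) : Measurable (fun q : ℝ × ℝ => K τ q.1 q.2) :=
  (continuous_K τ).measurable

section Nu
variable {τ : ℝ} (ν : Measure ℝ) [IsProbabilityMeasure ν]

lemma integrable_K_nu (hτ : 0 < τ) (y : ℝ) : Integrable (fun x => K τ y x) ν := by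
  refine Integrable.mono' (integrable_const ((Real.sqrt (2 * Real.pi * τ ^ 2))⁻¹)) ?_
    (Filter.Eventually.of_forall fun x => K_le τ y x)
  exact (continuous_K2 τ y).aestronglyMeasurable

lemma integrable_K'_nu (hτ : 0 < τ) (y : ℝ) :
    Integrable (fun x => (x - y) / τ ^ 2 * K τ y x) ν := by
  refine Integrable.mono'
    (integrable_const ((Real.sqrt (2 * Real.pi * τ ^ 2))⁻¹ * (2 / τ))) ?_
    (Filter.Eventually.of_forall fun x => K'_bound hτ y x)
  exact (continuous_K'2 τ y).aestronglyMeasurable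

lemma integrable_mul_K_nu (hτ : 0 < τ) (y : ℝ) :
    Integrable (fun x => x * K τ y x) ν := by
  have heq : (fun x => x * K τ y x)
      = fun x => y * K τ y x + τ ^ 2 * ((x - y) / τ ^ 2 * K τ y x) := by
    funext x
    have : (τ:ℝ) ^ 2 ≠ 0 := by positivity
    field_simp
    ring
  rw [heq]
  exact ((integrable_K_nu ν hτ y).const_mul y).add ((integrable_K'_nu ν hτ y).const_mul (τ ^ 2))

lemma hasDerivAt_p (hτ : 0 < τ) (y : ℝ) :
    HasDerivAt (fun t => ∫ x, K τ t x ∂ν) (∫ x, (x - y) / τ ^ 2 * K τ y x ∂ν) y := by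
  have hmeas : ∀ t : ℝ, AEStronglyMeasurable (fun x => K τ t x) ν := fun t =>
    (continuous_K2 τ t).aestronglyMeasurable
  have hmeas' : AEStronglyMeasurable (fun x => (x - y) / τ ^ 2 * K τ y x) ν :=
    (continuous_K'2 τ y).aestronglyMeasurable
  have hbound : ∀ᵐ x ∂ν, ∀ t ∈ Metric.ball y 1,
      ‖(x - t) / τ ^ 2 * K τ t x‖ ≤ (Real.sqrt (2 * Real.pi * τ ^ 2))⁻¹ * (2 / τ) :=
    Filter.Eventually.of_forall fun x t _ => K'_bound hτ t x
  have hdiff : ∀ᵐ x ∂ν, ∀ t ∈ Metric.ball y 1,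
      HasDerivAt (fun t => K τ t x) ((x - t) / τ ^ 2 * K τ t x) t :=
    Filter.Eventually.of_forall fun x t _ => hasDerivAt_K hτ x t
  exact (hasDerivAt_integral_of_dominated_loc_of_deriv_le (Metric.ball_mem_nhds y one_pos)
    (Filter.Eventually.of_forall hmeas) (integrable_K_nu ν hτ y) hmeas'
    hbound (integrable_const _) hdiff).2

lemma deriv_log_p (hτ : 0 < τ) {p : ℝ → ℝ} (hp : ∀ y, p y = ∫ x, K τ y x ∂ν)
    (hppos : ∀ y, 0 < p y) (y : ℝ) :
    deriv (fun u => Real.log (p u)) y = (∫ x, (x - y) / τ ^ 2 * K τ y x ∂ν) / p y := by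
  have hd : HasDerivAt p (∫ x, (x - y) / τ ^ 2 * K τ y x ∂ν) y := by
    have h := hasDerivAt_p ν hτ y
    have hfun : p = fun t => ∫ x, K τ t x ∂ν := funext hp
    rw [hfun]; exact h
  exact (hd.log (hppos y).ne').deriv

lemma key_identity (hτ : 0 < τ) {p : ℝ → ℝ} (hp : ∀ y, p y = ∫ x, K τ y x ∂ν)
    (hppos : ∀ y, 0 < p y) (y : ℝ) :
    ∫ x, x * K τ y x ∂ν = (y + τ ^ 2 * deriv (fun u => Real.log (p u)) y) * p y := by
  rw [deriv_log_p ν hτ hp hppos y]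
  have hsplit : ∫ x, x * K τ y x ∂ν
      = y * ∫ x, K τ y x ∂ν + τ ^ 2 * ∫ x, (x - y) / τ ^ 2 * K τ y x ∂ν := by
    rw [← integral_const_mul, ← integral_const_mul,
      ← integral_add ((integrable_K_nu ν hτ y).const_mul y)
        ((integrable_K'_nu ν hτ y).const_mul (τ ^ 2))]
    congr 1; funext x
    have hτ2 : (τ:ℝ) ^ 2 ≠ 0 := by positivity
    field_simp
    ring
  rw [hsplit, ← hp y]
  have hpne : p y ≠ 0 := (hppos y).ne'
  field_simp

end Nu

lemma map_affine {τ : ℝ} (hτ : 0 < τ) (x : ℝ) :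
    Measure.map (fun z => x + τ * z) (gaussianReal 0 1)
      = gaussianReal x ⟨τ^2, sq_nonneg τ⟩ := by
  have h1 : (fun z : ℝ => x + τ * z) = (fun w : ℝ => x + w) ∘ (fun z : ℝ => τ * z) := rfl
  rw [h1, ← Measure.map_map (by fun_prop) (by fun_prop)]
  rw [show (fun z : ℝ => τ * z) = (fun z : ℝ => τ * z) from rfl]
  rw [gaussianReal_map_const_mul τ, gaussianReal_map_const_add x]
  norm_num
  rfl

lemma gaussianReal_restrict_lintegral {τ : ℝ} (hτ : 0 < τ) (x : ℝ) {s : Set ℝ}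
    (hs : MeasurableSet s) :
    gaussianReal x ⟨τ^2, sq_nonneg τ⟩ s = ∫⁻ y in s, ENNReal.ofReal (K τ y x) := by
  rw [gaussianReal_apply _ (Vne hτ)]
  rfl

section Main
variable {Ω : Type*} [MeasurableSpace Ω] {μ : Measure Ω} [IsProbabilityMeasure μ]
  {X Z : Ω → ℝ} {τ : ℝ}

lemma joint_law (hX : Measurable X) (hZ : Measurable Z)
    (hZlaw : Measure.map Z μ = gaussianReal 0 1) (hindep : IndepFun X Z μ) :
    Measure.map (fun ω => (X ω, Z ω)) μ = (Measure.map X μ).prod (gaussianReal 0 1) := by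
  rw [← hZlaw]
  exact (indepFun_iff_map_prod_eq_prod_map_map hX.aemeasurable hZ.aemeasurable).1 hindep

lemma map_Y_eq (hX : Measurable X) (hZ : Measurable Z)
    (hZlaw : Measure.map Z μ = gaussianReal 0 1) (hindep : IndepFun X Z μ)
    (hτ : 0 < τ) {p : ℝ → ℝ}
    (hp : ∀ y, p y = ∫ x, K τ y x ∂(Measure.map X μ)) :
    Measure.map (fun ω => X ω + τ * Z ω) μ
      = volume.withDensity (fun y => ENNReal.ofReal (p y)) := by
  set ν := Measure.map X μ with hν
  haveI : IsProbabilityMeasure ν := Measure.isProbabilityMeasure_map hX.aemeasurable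
  have hcomp : (fun ω => X ω + τ * Z ω)
      = (fun q : ℝ × ℝ => q.1 + τ * q.2) ∘ (fun ω => (X ω, Z ω)) := rfl
  rw [hcomp, ← Measure.map_map (by fun_prop) (hX.prodMk hZ),
    joint_law hX hZ hZlaw hindep]
  ext s hs
  rw [Measure.map_apply (by fun_prop) hs,
    Measure.prod_apply ((by fun_prop : Measurable fun q : ℝ × ℝ => q.1 + τ * q.2) hs),
    withDensity_apply _ hs]
  have hinner : ∀ x : ℝ, (gaussianReal 0 1) (Prod.mk x ⁻¹' ((fun q : ℝ × ℝ => q.1 + τ * q.2) ⁻¹' s))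
      = ∫⁻ y in s, ENNReal.ofReal (K τ y x) := by
    intro x
    have hpre : Prod.mk x ⁻¹' ((fun q : ℝ × ℝ => q.1 + τ * q.2) ⁻¹' s)
        = (fun z => x + τ * z) ⁻¹' s := rfl
    rw [hpre, ← Measure.map_apply (by fun_prop) hs, map_affine hτ x,
      gaussianReal_restrict_lintegral hτ x hs]
  simp_rw [hinner]
  rw [lintegral_lintegral_swap]
  · congr 1
    funext y
    rw [hp y, ofReal_integral_eq_lintegral_ofReal (integrable_K_nu ν hτ y)
      (Filter.Eventually.of_forall fun x => K_nonneg τ y x)]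
  · apply Measurable.aemeasurable
    apply Measurable.ennreal_ofReal
    exact ((measurable_K τ).comp (measurable_swap)).comp measurable_id

end Main

lemma integrable_exp_quarter {τ : ℝ} (hτ : 0 < τ) :
    Integrable (fun u : ℝ => Real.exp (-u ^ 2 / (4 * τ ^ 2))) volume := by
  have h := integrable_exp_neg_mul_sq (b := (4 * τ ^ 2)⁻¹) (by positivity)
  refine h.congr (Filter.Eventually.of_forall fun u => ?_)
  simp only []
  rw [neg_div, div_eq_inv_mul, neg_mul]

lemma K'_bound2 {τ : ℝ} (hτ : 0 < τ) (y x : ℝ) :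
    ‖(x - y) / τ ^ 2 * K τ y x‖ ≤ (Real.sqrt (2 * Real.pi * τ ^ 2))⁻¹ * (2 * Real.sqrt 2 / τ)
      * Real.exp (-(y - x) ^ 2 / (4 * τ ^ 2)) := by
  have hsplit : Real.exp (-(y - x) ^ 2 / (2 * τ ^ 2))
      = Real.exp (-(y - x) ^ 2 / (4 * τ ^ 2)) * Real.exp (-(y - x) ^ 2 / (4 * τ ^ 2)) := by
    rw [← Real.exp_add]
    congr 1
    field_simp
    ring
  have hτ' : 0 < Real.sqrt 2 * τ := by positivity
  have habs := abs_mul_exp_le hτ' (y - x)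
  have h2 : (2:ℝ) * (Real.sqrt 2 * τ) ^ 2 = 4 * τ ^ 2 := by
    rw [mul_pow, Real.sq_sqrt (by norm_num : (0:ℝ) ≤ 2)]
    ring
  rw [h2] at habs
  rw [norm_mul, Real.norm_of_nonneg (K_nonneg τ y x)]
  unfold K
  have habs2 : ‖(x - y) / τ ^ 2‖ = |y - x| / τ ^ 2 := by
    rw [Real.norm_eq_abs, abs_div, abs_of_pos (by positivity : (0:ℝ) < τ ^ 2), abs_sub_comm]
  rw [habs2, hsplit]
  have hB : (0:ℝ) ≤ (Real.sqrt (2 * Real.pi * τ ^ 2))⁻¹ := by positivity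
  calc |y - x| / τ ^ 2 * ((Real.sqrt (2 * Real.pi * τ ^ 2))⁻¹ *
        (Real.exp (-(y - x) ^ 2 / (4 * τ ^ 2)) * Real.exp (-(y - x) ^ 2 / (4 * τ ^ 2))))
      = (Real.sqrt (2 * Real.pi * τ ^ 2))⁻¹ / τ ^ 2 *
        (|y - x| * Real.exp (-(y - x) ^ 2 / (4 * τ ^ 2))) *
        Real.exp (-(y - x) ^ 2 / (4 * τ ^ 2)) := by ring
    _ ≤ (Real.sqrt (2 * Real.pi * τ ^ 2))⁻¹ / τ ^ 2 * (2 * (Real.sqrt 2 * τ)) *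
        Real.exp (-(y - x) ^ 2 / (4 * τ ^ 2)) := by
        apply mul_le_mul_of_nonneg_right _ (Real.exp_nonneg _)
        apply mul_le_mul_of_nonneg_left habs (by positivity)
    _ = (Real.sqrt (2 * Real.pi * τ ^ 2))⁻¹ * (2 * Real.sqrt 2 / τ)
        * Real.exp (-(y - x) ^ 2 / (4 * τ ^ 2)) := by
        field_simp

lemma continuous_K'pair (τ : ℝ) : Continuous (fun q : ℝ × ℝ => (q.2 - q.1) / τ ^ 2 * K τ q.1 q.2) := by
  unfold K; fun_prop

lemma stronglyMeasurable_q (τ : ℝ) (ν : Measure ℝ) [IsProbabilityMeasure ν] :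
    StronglyMeasurable (fun y => ∫ x, (x - y) / τ ^ 2 * K τ y x ∂ν) :=
  (continuous_K'pair τ).stronglyMeasurable.integral_prod_right'

lemma integrable_expbound_nu {τ : ℝ} (ν : Measure ℝ) [IsProbabilityMeasure ν] (hτ : 0 < τ)
    (C y : ℝ) (hC : 0 ≤ C) :
    Integrable (fun x => C * Real.exp (-(y - x) ^ 2 / (4 * τ ^ 2))) ν := by
  refine Integrable.mono' (integrable_const C) ?_ (Filter.Eventually.of_forall fun x => ?_)
  · exact (Continuous.aestronglyMeasurable (by fun_prop))
  · rw [Real.norm_eq_abs, abs_of_nonneg (by positivity)]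
    calc C * Real.exp (-(y - x) ^ 2 / (4 * τ ^ 2)) ≤ C * 1 := by
          apply mul_le_mul_of_nonneg_left _ hC
          rw [Real.exp_le_one_iff]
          exact div_nonpos_iff.2 (Or.inr ⟨neg_nonpos.2 (sq_nonneg _), by positivity⟩)
      _ = C := mul_one C

lemma integrable_q {τ : ℝ} (ν : Measure ℝ) [IsProbabilityMeasure ν] (hτ : 0 < τ) :
    Integrable (fun y => ∫ x, (x - y) / τ ^ 2 * K τ y x ∂ν) volume := by
  set C := (Real.sqrt (2 * Real.pi * τ ^ 2))⁻¹ * (2 * Real.sqrt 2 / τ) with hC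
  have hCpos : (0:ℝ) ≤ C := by rw [hC]; positivity
  refine ⟨(stronglyMeasurable_q τ ν).aestronglyMeasurable, ?_⟩
  have hint : ∀ y : ℝ, Integrable (fun x => C * Real.exp (-(y - x) ^ 2 / (4 * τ ^ 2))) ν :=
    fun y => integrable_expbound_nu ν hτ C y hCpos
  have hbound : ∀ y : ℝ, ‖∫ x, (x - y) / τ ^ 2 * K τ y x ∂ν‖
      ≤ ∫ x, C * Real.exp (-(y - x) ^ 2 / (4 * τ ^ 2)) ∂ν := by
    intro y
    refine (norm_integral_le_integral_norm _).trans ?_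
    exact integral_mono_of_nonneg (Filter.Eventually.of_forall fun x => norm_nonneg _)
      (hint y) (Filter.Eventually.of_forall fun x => K'_bound2 hτ y x)
  rw [hasFiniteIntegral_iff_norm]
  calc ∫⁻ y, ENNReal.ofReal ‖∫ x, (x - y) / τ ^ 2 * K τ y x ∂ν‖
      ≤ ∫⁻ y, ENNReal.ofReal (∫ x, C * Real.exp (-(y - x) ^ 2 / (4 * τ ^ 2)) ∂ν) := by
        exact lintegral_mono fun y => ENNReal.ofReal_le_ofReal (hbound y)
    _ = ∫⁻ y, ∫⁻ x, ENNReal.ofReal (C * Real.exp (-(y - x) ^ 2 / (4 * τ ^ 2))) ∂ν := by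
        congr 1; funext y
        rw [ofReal_integral_eq_lintegral_ofReal (hint y)
          (Filter.Eventually.of_forall fun x => by positivity)]
    _ = ∫⁻ x, ∫⁻ y, ENNReal.ofReal (C * Real.exp (-(y - x) ^ 2 / (4 * τ ^ 2))) ∂volume ∂ν := by
        rw [lintegral_lintegral_swap]
        apply Measurable.aemeasurable
        apply Measurable.ennreal_ofReal
        fun_prop
    _ = ∫⁻ x, ∫⁻ u, ENNReal.ofReal (C * Real.exp (-u ^ 2 / (4 * τ ^ 2))) ∂volume ∂ν := by
        congr 1; funext x
        have hmp := (measurePreserving_sub_right (volume : Measure ℝ) x)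
        exact hmp.lintegral_comp (f := fun u => ENNReal.ofReal (C * Real.exp (-u ^ 2 / (4 * τ ^ 2))))
          (by fun_prop)
    _ = ∫⁻ _, ENNReal.ofReal (C * ∫ u, Real.exp (-u ^ 2 / (4 * τ ^ 2)) ∂volume) ∂ν := by
        congr 1; funext x
        rw [← ofReal_integral_eq_lintegral_ofReal ((integrable_exp_quarter hτ).const_mul C)
          (Filter.Eventually.of_forall fun u => by positivity), integral_const_mul]
    _ < ⊤ := by
        rw [lintegral_const]
        exact ENNReal.mul_lt_top ENNReal.ofReal_lt_top (measure_lt_top _ _)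

section Main2
variable {Ω : Type*} [MeasurableSpace Ω] {μ : Measure Ω} [IsProbabilityMeasure μ]
  {X Z : Ω → ℝ} {τ : ℝ}

lemma setIntegral_X_eq (hX : Measurable X) (hZ : Measurable Z)
    (hZlaw : Measure.map Z μ = gaussianReal 0 1) (hindep : IndepFun X Z μ)
    (hXint : Integrable X μ) (hτ : 0 < τ) {A : Set ℝ} (hA : MeasurableSet A) :
    ∫ ω in (fun ω => X ω + τ * Z ω) ⁻¹' A, X ω ∂μ
      = ∫ y in A, (∫ x, x * K τ y x ∂(Measure.map X μ)) ∂volume := by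
  set ν := Measure.map X μ with hν
  haveI : IsProbabilityMeasure ν := Measure.isProbabilityMeasure_map hX.aemeasurable
  have hidint : Integrable (fun x : ℝ => x) ν := by
    have : Integrable id ν := by
      rw [hν, integrable_map_measure aestronglyMeasurable_id hX.aemeasurable]
      exact hXint
    exact this
  have hY : Measurable fun ω => X ω + τ * Z ω := by fun_prop
  set F : ℝ × ℝ → ℝ := fun q => Set.indicator A (fun _ => (1:ℝ)) (q.1 + τ * q.2) * q.1 with hF
  have hFmeas : Measurable F := by
    apply Measurable.mul _ measurable_fst
    exact (measurable_const.indicator hA).comp (by fun_prop)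
  -- step 1 : set integral to integral of F over μ
  have h1 : ∫ ω in (fun ω => X ω + τ * Z ω) ⁻¹' A, X ω ∂μ
      = ∫ ω, F (X ω, Z ω) ∂μ := by
    rw [← integral_indicator (hY hA)]
    congr 1
    funext ω
    by_cases h : X ω + τ * Z ω ∈ A
    · simp [hF, Set.indicator_of_mem, h, Set.indicator_of_mem (show ω ∈ (fun ω => X ω + τ * Z ω) ⁻¹' A from h)]
    · simp [hF, Set.indicator_of_notMem, h, Set.indicator_of_notMem (show ω ∉ (fun ω => X ω + τ * Z ω) ⁻¹' A from h)]
  -- step 2 : to product measure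
  have h2 : ∫ ω, F (X ω, Z ω) ∂μ = ∫ q, F q ∂(ν.prod (gaussianReal 0 1)) := by
    rw [← joint_law hX hZ hZlaw hindep, integral_map (hX.prodMk hZ).aemeasurable
      hFmeas.aestronglyMeasurable]
  -- integrability of F on the product
  have hFint : Integrable F (ν.prod (gaussianReal 0 1)) := by
    refine Integrable.mono' (g := fun q : ℝ × ℝ => |q.1|) ?_ hFmeas.aestronglyMeasurable
      (Filter.Eventually.of_forall fun q => ?_)
    · have habs : Integrable (fun x : ℝ => |x|) (Measure.map (Prod.fst : ℝ × ℝ → ℝ)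
          (ν.prod (gaussianReal 0 1))) := by
        rw [Measure.map_fst_prod]
        simpa [measure_univ] using hidint.abs
      exact (integrable_map_measure (measurable_abs.aestronglyMeasurable) measurable_fst.aemeasurable).1 habs
    · rw [hF]
      simp only [norm_mul, Real.norm_eq_abs]
      by_cases h : q.1 + τ * q.2 ∈ A
      · rw [Set.indicator_of_mem h]; simp
      · rw [Set.indicator_of_notMem h]; simp [abs_nonneg]
  -- step 3 : iterated integral
  have h3 : ∫ q, F q ∂(ν.prod (gaussianReal 0 1)) = ∫ x, ∫ z, F (x, z) ∂(gaussianReal 0 1) ∂ν :=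
    integral_prod F hFint
  -- step 4 : inner integral via the law of x + τ z
  have h4 : ∀ x : ℝ, ∫ z, F (x, z) ∂(gaussianReal 0 1) = ∫ w in A, x * K τ w x ∂volume := by
    intro x
    have e1 : ∫ z, F (x, z) ∂(gaussianReal 0 1)
        = (∫ z, Set.indicator A (fun _ => (1:ℝ)) (x + τ * z) ∂(gaussianReal 0 1)) * x :=
      integral_mul_const x _
    have e2 : ∫ z, Set.indicator A (fun _ => (1:ℝ)) (x + τ * z) ∂(gaussianReal 0 1)
        = ∫ w, Set.indicator A (fun _ => (1:ℝ)) w ∂(gaussianReal x ⟨τ^2, sq_nonneg τ⟩) := by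
      rw [← map_affine hτ x, integral_map (by fun_prop)
        ((measurable_const.indicator hA).aestronglyMeasurable)]
    have e3 : ∫ w, Set.indicator A (fun _ => (1:ℝ)) w ∂(gaussianReal x ⟨τ^2, sq_nonneg τ⟩)
        = ∫ w in A, K τ w x ∂volume := by
      rw [gaussianReal_of_var_ne_zero _ (Vne hτ)]
      have hdens : (gaussianPDF x ⟨τ^2, sq_nonneg τ⟩)
          = fun w => ((Real.toNNReal (K τ w x) : ℝ≥0) : ℝ≥0∞) := rfl
      rw [hdens, integral_withDensity_eq_integral_smul
        (by exact (continuous_K1 τ x).measurable.real_toNNReal)]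
      rw [← integral_indicator hA]
      congr 1
      funext w
      rw [NNReal.smul_def, Real.coe_toNNReal _ (K_nonneg τ w x)]
      by_cases h : w ∈ A
      · rw [Set.indicator_of_mem h, Set.indicator_of_mem h]; simp
      · rw [Set.indicator_of_notMem h, Set.indicator_of_notMem h]; simp
    rw [e1, e2, e3, ← integral_mul_const]
    apply integral_congr_ae
    refine Filter.Eventually.of_forall fun w => ?_
    ring
  -- step 5 : swap the order of integration
  have hswap : Integrable (fun q : ℝ × ℝ => q.1 * K τ q.2 q.1)
      (ν.prod (volume.restrict A)) := by
    refine (integrable_prod_iff ?_).2 ⟨?_, ?_⟩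
    · exact Continuous.aestronglyMeasurable (by unfold K; fun_prop)
    · exact Filter.Eventually.of_forall fun x =>
        ((integrable_K_volume hτ x).restrict.const_mul x)
    · refine Integrable.mono' (g := fun x => |x|) (hidint.abs) ?_
        (Filter.Eventually.of_forall fun x => ?_)
      · refine StronglyMeasurable.aestronglyMeasurable ?_
        exact (Continuous.stronglyMeasurable
          (by unfold K; fun_prop : Continuous fun q : ℝ × ℝ => ‖q.1 * K τ q.2 q.1‖)).integral_prod_right'
      · have hnn : 0 ≤ ∫ w in A, ‖x * K τ w x‖ ∂volume :=
          integral_nonneg fun w => norm_nonneg _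
        rw [Real.norm_of_nonneg hnn]
        have : ∀ w, ‖x * K τ w x‖ = |x| * K τ w x := fun w => by
          rw [norm_mul, Real.norm_eq_abs, Real.norm_of_nonneg (K_nonneg τ w x)]
        simp_rw [this]
        rw [integral_const_mul]
        calc |x| * ∫ w in A, K τ w x ∂volume ≤ |x| * 1 := by
              apply mul_le_mul_of_nonneg_left _ (abs_nonneg x)
              rw [← integral_K_volume hτ x]
              exact setIntegral_le_integral (integrable_K_volume hτ x)
                (Filter.Eventually.of_forall fun w => K_nonneg τ w x)
          _ = |x| := mul_one _
  have h5 : ∫ x, ∫ w in A, x * K τ w x ∂volume ∂ν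
      = ∫ w in A, ∫ x, x * K τ w x ∂ν ∂volume := integral_integral_swap hswap
  rw [h1, h2, h3]
  simp_rw [h4]
  exact h5

end Main2

section Main3
variable {Ω : Type*} [MeasurableSpace Ω] {μ : Measure Ω} [IsProbabilityMeasure μ]
  {X Z : Ω → ℝ} {τ : ℝ}

lemma stronglyMeasurable_p (τ : ℝ) (ν : Measure ℝ) [IsProbabilityMeasure ν] :
    StronglyMeasurable (fun y => ∫ x, K τ y x ∂ν) :=
  (continuous_K τ).stronglyMeasurable.integral_prod_right'

lemma setIntegral_f_eq (hX : Measurable X) (hZ : Measurable Z)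
    (hZlaw : Measure.map Z μ = gaussianReal 0 1) (hindep : IndepFun X Z μ)
    (hτ : 0 < τ) {p : ℝ → ℝ}
    (hp : ∀ y, p y = ∫ x, K τ y x ∂(Measure.map X μ)) (hpnn : ∀ y, 0 ≤ p y)
    {f : ℝ → ℝ} (hf : Measurable f) {A : Set ℝ} (hA : MeasurableSet A) :
    ∫ ω in (fun ω => X ω + τ * Z ω) ⁻¹' A, f (X ω + τ * Z ω) ∂μ
      = ∫ y in A, f y * p y ∂volume := by
  have hY : Measurable fun ω => X ω + τ * Z ω := by fun_prop
  have hmap := map_Y_eq hX hZ hZlaw hindep hτ hp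
  have hpm : Measurable p := by
    have h : p = fun y => ∫ x, K τ y x ∂(Measure.map X μ) := funext hp
    rw [h]
    haveI : IsProbabilityMeasure (Measure.map X μ) := Measure.isProbabilityMeasure_map hX.aemeasurable
    exact (stronglyMeasurable_p τ _).measurable
  rw [← setIntegral_map hA hf.aestronglyMeasurable hY.aemeasurable, hmap]
  have hdens : (fun y => ENNReal.ofReal (p y))
      = fun y => ((Real.toNNReal (p y) : ℝ≥0) : ℝ≥0∞) := rfl
  rw [hdens, restrict_withDensity hA, integral_withDensity_eq_integral_smul hpm.real_toNNReal]
  apply integral_congr_ae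
  refine Filter.Eventually.of_forall fun y => ?_
  show (p y).toNNReal • f y = f y * p y
  rw [NNReal.smul_def, Real.coe_toNNReal _ (hpnn y), smul_eq_mul]
  ring

lemma integrable_id_gaussian : Integrable (fun x : ℝ => x) (gaussianReal 0 1) := by
  rw [gaussianReal_of_var_ne_zero _ one_ne_zero,
    integrable_withDensity_iff (measurable_gaussianPDF _ _)
      (Filter.Eventually.of_forall fun y => ENNReal.ofReal_lt_top)]
  have hg : ∀ x : ℝ, (gaussianPDF 0 1 x).toReal = (Real.sqrt (2 * Real.pi))⁻¹ * Real.exp (-x ^ 2 / 2) := by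
    intro x
    rw [gaussianPDF, ENNReal.toReal_ofReal (gaussianPDFReal_nonneg _ _ _), gaussianPDFReal]
    norm_num
  simp_rw [hg]
  refine Integrable.mono'
    (g := fun x : ℝ => (Real.sqrt (2 * Real.pi))⁻¹ * (2 * Real.sqrt 2) * Real.exp (-x ^ 2 / (4 * 1 ^ 2)))
    (((integrable_exp_quarter one_pos).const_mul _)) (Continuous.aestronglyMeasurable (by fun_prop))
    (Filter.Eventually.of_forall fun x => ?_)
  have hτ' : (0:ℝ) < Real.sqrt 2 := by positivity
  have h2 : (2:ℝ) * Real.sqrt 2 ^ 2 = 4 := by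
    rw [Real.sq_sqrt (by norm_num : (0:ℝ) ≤ 2)]; norm_num
  have habs : |x| * Real.exp (-x ^ 2 / 4) ≤ 2 * Real.sqrt 2 := by
    have := abs_mul_exp_le hτ' x
    rwa [h2] at this
  have hsplit : Real.exp (-x ^ 2 / 2) = Real.exp (-x ^ 2 / 4) * Real.exp (-x ^ 2 / 4) := by
    rw [← Real.exp_add]; congr 1; ring
  show ‖x * ((Real.sqrt (2 * Real.pi))⁻¹ * Real.exp (-x ^ 2 / 2))‖
      ≤ (Real.sqrt (2 * Real.pi))⁻¹ * (2 * Real.sqrt 2) * Real.exp (-x ^ 2 / (4 * 1 ^ 2))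
  rw [norm_mul, Real.norm_eq_abs]
  rw [Real.norm_of_nonneg (by positivity : (0:ℝ) ≤ (Real.sqrt (2 * Real.pi))⁻¹ * Real.exp (-x ^ 2 / 2)), hsplit]
  have hone : (4:ℝ) * 1 ^ 2 = 4 := by norm_num
  rw [hone]
  calc |x| * ((Real.sqrt (2 * Real.pi))⁻¹ * (Real.exp (-x ^ 2 / 4) * Real.exp (-x ^ 2 / 4)))
      = (Real.sqrt (2 * Real.pi))⁻¹ * (|x| * Real.exp (-x ^ 2 / 4)) * Real.exp (-x ^ 2 / 4) := by ring
    _ ≤ (Real.sqrt (2 * Real.pi))⁻¹ * (2 * Real.sqrt 2) * Real.exp (-x ^ 2 / 4) := by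
        apply mul_le_mul_of_nonneg_right _ (Real.exp_nonneg _)
        exact mul_le_mul_of_nonneg_left habs (by positivity)

lemma integrable_g (hX : Measurable X) (hZ : Measurable Z)
    (hZlaw : Measure.map Z μ = gaussianReal 0 1) (hindep : IndepFun X Z μ)
    (hX2 : MemLp X 2 μ) (hτ : 0 < τ) {p : ℝ → ℝ}
    (hp : ∀ y, p y = ∫ x, K τ y x ∂(Measure.map X μ)) (hppos : ∀ y, 0 < p y) :
    Integrable (fun ω => (X ω + τ * Z ω)
      + τ ^ 2 * deriv (fun u => Real.log (p u)) (X ω + τ * Z ω)) μ := by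
  set ν := Measure.map X μ with hν
  haveI : IsProbabilityMeasure ν := Measure.isProbabilityMeasure_map hX.aemeasurable
  have hY : Measurable fun ω => X ω + τ * Z ω := by fun_prop
  have hZint : Integrable Z μ := by
    have h := (integrable_map_measure aestronglyMeasurable_id hZ.aemeasurable).1
      (by rw [hZlaw]; exact integrable_id_gaussian)
    exact h
  have hYint : Integrable (fun ω => X ω + τ * Z ω) μ :=
    (hX2.integrable one_le_two).add (hZint.const_mul τ)
  have hpm : Measurable p := by
    have h : p = fun y => ∫ x, K τ y x ∂ν := funext hp
    rw [h]; exact (stronglyMeasurable_p τ ν).measurable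
  have hd : Integrable (fun ω => deriv (fun u => Real.log (p u)) (X ω + τ * Z ω)) μ := by
    have h1 : Integrable (deriv (fun u => Real.log (p u)))
        (Measure.map (fun ω => X ω + τ * Z ω) μ) := by
      rw [map_Y_eq hX hZ hZlaw hindep hτ hp,
        integrable_withDensity_iff hpm.ennreal_ofReal
          (Filter.Eventually.of_forall fun y => ENNReal.ofReal_lt_top)]
      have h : (fun y => deriv (fun u => Real.log (p u)) y * (ENNReal.ofReal (p y)).toReal)
          = fun y => ∫ x, (x - y) / τ ^ 2 * K τ y x ∂ν := by
        funext y
        rw [ENNReal.toReal_ofReal (hppos y).le, deriv_log_p ν hτ hp hppos y,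
          div_mul_cancel₀ _ (hppos y).ne']
      rw [h]
      exact integrable_q ν hτ
    exact (integrable_map_measure (measurable_deriv _).aestronglyMeasurable
      hY.aemeasurable).1 h1
  exact hYint.add (hd.const_mul (τ ^ 2))

end Main3


/-- Tweedie's formula: the posterior mean of `X` given `X + τZ = y` equals
`y + τ² ∂_y log p(y; τ)`, where `p(·; τ)` is the density of `X + τZ`. -/
theorem stmt_2
    {Ω : Type*} [MeasurableSpace Ω] (μ : Measure Ω) [IsProbabilityMeasure μ]
    (X Z : Ω → ℝ) (hX : Measurable X) (hZ : Measurable Z)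
    (hZlaw : Measure.map Z μ = gaussianReal 0 1)
    (hindep : IndepFun X Z μ)
    (hX2 : MemLp X 2 μ)
    (τ : ℝ) (hτ : 0 < τ)
    (p : ℝ → ℝ)
    (hp : ∀ y, p y = ∫ x, (Real.sqrt (2 * Real.pi * τ ^ 2))⁻¹ *
            Real.exp (-(y - x) ^ 2 / (2 * τ ^ 2)) ∂(Measure.map X μ))
    (hppos : ∀ y, 0 < p y)
    (hpsmooth : ∀ y, DifferentiableAt ℝ (fun u => Real.log (p u)) y) :
    (fun ω => (X ω + τ * Z ω) + τ ^ 2 * deriv (fun u => Real.log (p u)) (X ω + τ * Z ω))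
      =ᵐ[μ] μ[X | MeasurableSpace.comap (fun ω => X ω + τ * Z ω) inferInstance] := by
  set ν := Measure.map X μ with hν
  haveI : IsProbabilityMeasure ν := Measure.isProbabilityMeasure_map hX.aemeasurable
  have hp' : ∀ y, p y = ∫ x, K τ y x ∂ν := hp
  have hY : Measurable fun ω => X ω + τ * Z ω := by fun_prop
  have hm : MeasurableSpace.comap (fun ω => X ω + τ * Z ω) inferInstance
      ≤ ‹MeasurableSpace Ω› := hY.comap_le
  have hfm : Measurable fun y : ℝ => y + τ ^ 2 * deriv (fun u => Real.log (p u)) y :=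
    measurable_id.add ((measurable_deriv _).const_mul _)
  have hgint := integrable_g hX hZ hZlaw hindep hX2 hτ hp' hppos
  refine ae_eq_condExp_of_forall_setIntegral_eq hm (hX2.integrable one_le_two)
    (fun s _ _ => hgint.integrableOn) (fun s hs _ => ?_) ?_
  · obtain ⟨A, hA, rfl⟩ := hs
    have hL : ∫ ω in (fun ω => X ω + τ * Z ω) ⁻¹' A,
        ((X ω + τ * Z ω) + τ ^ 2 * deriv (fun u => Real.log (p u)) (X ω + τ * Z ω)) ∂μ
        = ∫ y in A, (y + τ ^ 2 * deriv (fun u => Real.log (p u)) y) * p y ∂volume :=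
      setIntegral_f_eq hX hZ hZlaw hindep hτ hp' (fun y => (hppos y).le) hfm hA
    have hR : ∫ ω in (fun ω => X ω + τ * Z ω) ⁻¹' A, X ω ∂μ
        = ∫ y in A, (∫ x, x * K τ y x ∂ν) ∂volume :=
      setIntegral_X_eq hX hZ hZlaw hindep (hX2.integrable one_le_two) hτ hA
    rw [hL, hR]
    refine (setIntegral_congr_fun hA fun y _ => ?_).symm
    exact key_identity ν hτ hp' hppos y
  · refine StronglyMeasurable.aestronglyMeasurable ?_
    have hYm : Measurable[MeasurableSpace.comap (fun ω => X ω + τ * Z ω) inferInstance]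
        (fun ω => X ω + τ * Z ω) := Measurable.of_comap_le le_rfl
    exact (hfm.comp hYm).stronglyMeasurable
end

section
/- Let p be a probability density on ℝ obtained as the convolution of any probability measure μ with the Gaussian N(0, τ²) for τ > 0. Then the score function ∂_y log p(y) is Lipschitz on any region where an a priori second-moment bound holds; concretely, if μ is supported in [−K, K], then ∂_y log p is (K²/τ⁴ + 1/τ²)-Lipschitz on ℝ. -/
open MeasureTheory Real

noncomputable def gg (τ y x : ℝ) : ℝ :=
  (Real.sqrt (2 * Real.pi * τ ^ 2))⁻¹ * Real.exp (-(y - x) ^ 2 / (2 * τ ^ 2))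

noncomputable def gg1 (τ y x : ℝ) : ℝ := (-(y - x) / τ ^ 2) * gg τ y x

noncomputable def gg2 (τ y x : ℝ) : ℝ :=
  ((y - x) ^ 2 / τ ^ 4 - 1 / τ ^ 2) * gg τ y x

lemma aux_abs_mul_exp_le {τ : ℝ} (hτ : 0 < τ) (u : ℝ) :
    |u| * Real.exp (-u ^ 2 / (2 * τ ^ 2)) ≤ 1 + 2 * τ ^ 2 := by
  have hE : Real.exp (-u ^ 2 / (2 * τ ^ 2)) ≤ 1 := by
    rw [Real.exp_le_one_iff]
    have : (0:ℝ) < 2 * τ ^ 2 := by positivity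
    exact div_nonpos_of_nonpos_of_nonneg (neg_nonpos.2 (sq_nonneg u)) this.le
  have hEpos := Real.exp_pos (-u ^ 2 / (2 * τ ^ 2))
  rcases le_total |u| 1 with h | h
  · nlinarith [abs_nonneg u, sq_nonneg τ]
  · have hq : (0:ℝ) < u ^ 2 / (2 * τ ^ 2) := by
      have : (0:ℝ) < u ^ 2 := by nlinarith [abs_nonneg u, sq_abs u]
      positivity
    have h2 : u ^ 2 / (2 * τ ^ 2) ≤ Real.exp (u ^ 2 / (2 * τ ^ 2)) := by
      nlinarith [Real.add_one_le_exp (u ^ 2 / (2 * τ ^ 2))]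
    have h3 : Real.exp (-u ^ 2 / (2 * τ ^ 2)) ≤ (u ^ 2 / (2 * τ ^ 2))⁻¹ := by
      rw [show -u ^ 2 / (2 * τ ^ 2) = -(u ^ 2 / (2 * τ ^ 2)) by ring, Real.exp_neg]
      exact inv_anti₀ hq h2
    have h4 : Real.exp (-u ^ 2 / (2 * τ ^ 2)) * u ^ 2 ≤ 2 * τ ^ 2 := by
      have : (u ^ 2 / (2 * τ ^ 2))⁻¹ = 2 * τ ^ 2 / u ^ 2 := by
        rw [inv_div]
      rw [this] at h3
      have hu2 : (0:ℝ) < u ^ 2 := by nlinarith [sq_abs u]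
      calc Real.exp (-u ^ 2 / (2 * τ ^ 2)) * u ^ 2 ≤ (2 * τ ^ 2 / u ^ 2) * u ^ 2 := by
            exact mul_le_mul_of_nonneg_right h3 hu2.le
        _ = 2 * τ ^ 2 := by exact div_mul_cancel₀ _ hu2.ne'
    nlinarith [sq_abs u, abs_nonneg u]

lemma aux_sq_mul_exp_le {τ : ℝ} (hτ : 0 < τ) (u : ℝ) :
    u ^ 2 * Real.exp (-u ^ 2 / (2 * τ ^ 2)) ≤ 1 + 16 * τ ^ 4 := by
  have hE : Real.exp (-u ^ 2 / (2 * τ ^ 2)) ≤ 1 := by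
    rw [Real.exp_le_one_iff]
    have : (0:ℝ) < 2 * τ ^ 2 := by positivity
    exact div_nonpos_of_nonpos_of_nonneg (neg_nonpos.2 (sq_nonneg u)) this.le
  have hEpos := Real.exp_pos (-u ^ 2 / (2 * τ ^ 2))
  rcases le_total (u ^ 2) 1 with h | h
  · nlinarith [pow_pos hτ 4]
  · set q : ℝ := u ^ 2 / (2 * τ ^ 2) with hqdef
    have hq : (0:ℝ) < q := by positivity
    have h2 : q ^ 2 / 4 ≤ Real.exp q := by
      have ha := Real.add_one_le_exp (q / 2)
      have hb : Real.exp q = Real.exp (q / 2) * Real.exp (q / 2) := by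
        rw [← Real.exp_add]; ring_nf
      nlinarith [Real.exp_pos (q / 2), sq_nonneg (q / 2 - 1)]
    have h3 : Real.exp (-u ^ 2 / (2 * τ ^ 2)) ≤ (q ^ 2 / 4)⁻¹ := by
      rw [show -u ^ 2 / (2 * τ ^ 2) = -q by rw [hqdef]; ring, Real.exp_neg]
      exact inv_anti₀ (by positivity) h2
    have h4 : Real.exp (-u ^ 2 / (2 * τ ^ 2)) * u ^ 4 ≤ 16 * τ ^ 4 := by
      have hu : u ≠ 0 := by intro h0; rw [h0] at h; norm_num at h
      have hq2 : (q ^ 2 / 4)⁻¹ = 16 * τ ^ 4 / u ^ 4 := by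
        rw [hqdef]; field_simp; ring
      rw [hq2] at h3
      have hu4 : (0:ℝ) < u ^ 4 := by nlinarith
      calc Real.exp (-u ^ 2 / (2 * τ ^ 2)) * u ^ 4 ≤ (16 * τ ^ 4 / u ^ 4) * u ^ 4 :=
            mul_le_mul_of_nonneg_right h3 hu4.le
        _ = 16 * τ ^ 4 := by field_simp
    have h5 : (0:ℝ) < u ^ 2 := by nlinarith
    have h6 : u ^ 2 * Real.exp (-u ^ 2 / (2 * τ ^ 2)) ≤
        Real.exp (-u ^ 2 / (2 * τ ^ 2)) * u ^ 4 := by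
      nlinarith [mul_nonneg (mul_pos hEpos h5).le (sub_nonneg.2 h)]
    nlinarith [pow_pos hτ 4]

lemma gg_pos {τ : ℝ} (hτ : 0 < τ) (y x : ℝ) : 0 < gg τ y x := by
  unfold gg
  have : (0:ℝ) < 2 * Real.pi * τ ^ 2 := by positivity
  positivity

lemma gg_le {τ : ℝ} (hτ : 0 < τ) (y x : ℝ) :
    gg τ y x ≤ (Real.sqrt (2 * Real.pi * τ ^ 2))⁻¹ := by
  unfold gg
  have hc : (0:ℝ) < (Real.sqrt (2 * Real.pi * τ ^ 2))⁻¹ := by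
    have : (0:ℝ) < 2 * Real.pi * τ ^ 2 := by positivity
    positivity
  have hE : Real.exp (-(y - x) ^ 2 / (2 * τ ^ 2)) ≤ 1 := by
    rw [Real.exp_le_one_iff]
    exact div_nonpos_of_nonpos_of_nonneg (neg_nonpos.2 (sq_nonneg _)) (by positivity)
  nlinarith

lemma gg_contx (τ y : ℝ) : Continuous (fun x => gg τ y x) := by
  unfold gg; fun_prop

lemma gg1_contx (τ y : ℝ) : Continuous (fun x => gg1 τ y x) := by
  unfold gg1 gg; fun_prop

lemma gg2_contx (τ y : ℝ) : Continuous (fun x => gg2 τ y x) := by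
  unfold gg2 gg; fun_prop

lemma gg_hasDeriv {τ : ℝ} (hτ : 0 < τ) (x y : ℝ) :
    HasDerivAt (fun y => gg τ y x) (gg1 τ y x) y := by
  have h0 : HasDerivAt (fun y : ℝ => y - x) 1 y := (hasDerivAt_id y).sub_const x
  have h1 : HasDerivAt (fun y : ℝ => -(y - x) ^ 2 / (2 * τ ^ 2))
      (-(y - x) / τ ^ 2) y := by
    have h0' := (h0.pow 2).neg.div_const (2 * τ ^ 2)
    refine h0'.congr_deriv ?_
    field_simp
    ring
  have h2 := (h1.exp).const_mul ((Real.sqrt (2 * Real.pi * τ ^ 2))⁻¹)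
  refine h2.congr_deriv ?_
  unfold gg1 gg
  ring

lemma gg1_hasDeriv {τ : ℝ} (hτ : 0 < τ) (x y : ℝ) :
    HasDerivAt (fun y => gg1 τ y x) (gg2 τ y x) y := by
  have ha : HasDerivAt (fun y : ℝ => -(y - x) / τ ^ 2) (-1 / τ ^ 2) y := by
    have h0 : HasDerivAt (fun y : ℝ => y - x) 1 y := (hasDerivAt_id y).sub_const x
    have := (h0.neg).div_const (τ ^ 2)
    exact this
  have := ha.mul (gg_hasDeriv hτ x y)
  refine this.congr_deriv ?_
  unfold gg2 gg1 gg
  field_simp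
  ring
/-- If `ν` is a probability measure supported in `[-K, K]` and `p` is its convolution with
`N(0, τ²)`, then the score `∂_y log p` is `(K²/τ⁴ + 1/τ²)`-Lipschitz on `ℝ`. -/
theorem stmt_19
    (ν : Measure ℝ) [IsProbabilityMeasure ν]
    (K τ : ℝ) (hK : 0 ≤ K) (hτ : 0 < τ)
    (hsupp : ν (Set.Icc (-K) K)ᶜ = 0)
    (p : ℝ → ℝ)
    (hp : ∀ y, p y = ∫ x, (Real.sqrt (2 * Real.pi * τ ^ 2))⁻¹ *
        Real.exp (-(y - x) ^ 2 / (2 * τ ^ 2)) ∂ν) :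
    ∀ y z : ℝ,
      |deriv (fun u => Real.log (p u)) y - deriv (fun u => Real.log (p u)) z|
        ≤ (K ^ 2 / τ ^ 4 + 1 / τ ^ 2) * |y - z| := by
  intro y z
  have hτ2 : (0:ℝ) < τ ^ 2 := by positivity
  have hτ4 : (0:ℝ) < τ ^ 4 := by positivity
  set c : ℝ := (Real.sqrt (2 * Real.pi * τ ^ 2))⁻¹ with hc_def
  have hc : 0 < c := by
    rw [hc_def]
    have : (0:ℝ) < 2 * Real.pi * τ ^ 2 := by positivity
    positivity
  have hgg : ∀ w x, gg τ w x = c * Real.exp (-(w - x) ^ 2 / (2 * τ ^ 2)) := by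
    intro w x; rw [hc_def]; rfl
  have hpfun : p = fun w => ∫ x, gg τ w x ∂ν := by
    funext w; rw [hp w]; rfl
  -- a.e. bound on the support
  have haeK : ∀ᵐ x ∂ν, |x| ≤ K := by
    have h1 : ∀ᵐ x ∂ν, x ∈ Set.Icc (-K) K := by
      rw [ae_iff]
      convert hsupp using 2
      rfl
    filter_upwards [h1] with x hx
    exact abs_le.2 ⟨hx.1, hx.2⟩
  -- integrability helper
  have hint : ∀ (f : ℝ → ℝ) (M : ℝ), Continuous f → (∀ᵐ x ∂ν, ‖f x‖ ≤ M) →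
      Integrable f ν := fun f M hf hb => (integrable_const M).mono' hf.aestronglyMeasurable hb
  have hint_g : ∀ w, Integrable (fun x => gg τ w x) ν := fun w =>
    hint _ c (gg_contx τ w) (Filter.Eventually.of_forall fun x => by
      rw [Real.norm_eq_abs, abs_of_pos (gg_pos hτ w x)]
      rw [hc_def]; exact gg_le hτ w x)
  -- bounds on gg1 and gg2
  have hb1 : ∀ w x, ‖gg1 τ w x‖ ≤ c / τ ^ 2 * (1 + 2 * τ ^ 2) := by
    intro w x
    have habs : |gg1 τ w x| = |w - x| / τ ^ 2 * gg τ w x := by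
      unfold gg1
      rw [abs_mul, abs_of_pos (gg_pos hτ w x), abs_div, abs_neg, abs_of_pos hτ2]
    rw [Real.norm_eq_abs, habs, hgg]
    calc |w - x| / τ ^ 2 * (c * Real.exp (-(w - x) ^ 2 / (2 * τ ^ 2)))
        = c / τ ^ 2 * (|w - x| * Real.exp (-(w - x) ^ 2 / (2 * τ ^ 2))) := by ring
      _ ≤ c / τ ^ 2 * (1 + 2 * τ ^ 2) :=
          mul_le_mul_of_nonneg_left (aux_abs_mul_exp_le hτ _) (by positivity)
  have hb2 : ∀ w x, ‖gg2 τ w x‖ ≤ c / τ ^ 4 * (1 + 16 * τ ^ 4) + c / τ ^ 2 := by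
    intro w x
    have hE1 : Real.exp (-(w - x) ^ 2 / (2 * τ ^ 2)) ≤ 1 := by
      rw [Real.exp_le_one_iff]
      exact div_nonpos_of_nonpos_of_nonneg (neg_nonpos.2 (sq_nonneg _)) (by positivity)
    have habs : |gg2 τ w x| ≤ ((w - x) ^ 2 / τ ^ 4 + 1 / τ ^ 2) * gg τ w x := by
      unfold gg2
      rw [abs_mul, abs_of_pos (gg_pos hτ w x)]
      apply mul_le_mul_of_nonneg_right _ (gg_pos hτ w x).le
      have h1 : (0:ℝ) ≤ (w - x) ^ 2 / τ ^ 4 := by positivity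
      have h2 : (0:ℝ) < 1 / τ ^ 2 := by positivity
      rw [abs_le]; constructor <;> linarith
    rw [Real.norm_eq_abs]
    refine habs.trans ?_
    rw [hgg]
    calc ((w - x) ^ 2 / τ ^ 4 + 1 / τ ^ 2) * (c * Real.exp (-(w - x) ^ 2 / (2 * τ ^ 2)))
        = c / τ ^ 4 * ((w - x) ^ 2 * Real.exp (-(w - x) ^ 2 / (2 * τ ^ 2)))
          + c / τ ^ 2 * Real.exp (-(w - x) ^ 2 / (2 * τ ^ 2)) := by ring
      _ ≤ c / τ ^ 4 * (1 + 16 * τ ^ 4) + c / τ ^ 2 * 1 := by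
          gcongr
          · exact aux_sq_mul_exp_le hτ _
      _ = c / τ ^ 4 * (1 + 16 * τ ^ 4) + c / τ ^ 2 := by ring
  have hint_g1 : ∀ w, Integrable (fun x => gg1 τ w x) ν := fun w =>
    hint _ _ (gg1_contx τ w) (Filter.Eventually.of_forall fun x => hb1 w x)
  -- derivative of p
  have hPd : ∀ w, HasDerivAt p (∫ x, gg1 τ w x ∂ν) w := by
    intro w
    rw [hpfun]
    have h := hasDerivAt_integral_of_dominated_loc_of_deriv_le
      (F := fun y x => gg τ y x) (F' := fun y x => gg1 τ y x)
      (bound := fun _ => c / τ ^ 2 * (1 + 2 * τ ^ 2)) (x₀ := w) (μ := ν) (Metric.ball_mem_nhds w one_pos)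
      (Filter.Eventually.of_forall fun u => (gg_contx τ u).aestronglyMeasurable)
      (hint_g w)
      ((gg1_contx τ w).aestronglyMeasurable)
      (Filter.Eventually.of_forall fun x u _ => hb1 u x)
      (integrable_const _)
      (Filter.Eventually.of_forall fun x u _ => gg_hasDeriv hτ x u)
    exact h.2
  -- derivative of p1
  have hP2d : ∀ w, HasDerivAt (fun u => ∫ x, gg1 τ u x ∂ν) (∫ x, gg2 τ w x ∂ν) w := by
    intro w
    have h := hasDerivAt_integral_of_dominated_loc_of_deriv_le
      (F := fun y x => gg1 τ y x) (F' := fun y x => gg2 τ y x)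
      (bound := fun _ => c / τ ^ 4 * (1 + 16 * τ ^ 4) + c / τ ^ 2) (x₀ := w) (μ := ν) (Metric.ball_mem_nhds w one_pos)
      (Filter.Eventually.of_forall fun u => (gg1_contx τ u).aestronglyMeasurable)
      (hint_g1 w)
      ((gg2_contx τ w).aestronglyMeasurable)
      (Filter.Eventually.of_forall fun x u _ => hb2 u x)
      (integrable_const _)
      (Filter.Eventually.of_forall fun x u _ => gg1_hasDeriv hτ x u)
    exact h.2
  -- positivity of p
  have hppos : ∀ w, 0 < p w := by
    intro w
    have hpw : p w = ∫ x, gg τ w x ∂ν := by rw [hp w]; rfl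
    rw [hpw]
    have hlow : ∀ᵐ x ∂ν,
        c * Real.exp (-(|w| + K) ^ 2 / (2 * τ ^ 2)) ≤ gg τ w x := by
      filter_upwards [haeK] with x hx
      rw [hgg]
      have h1 : |w - x| ≤ |w| + K := (abs_sub w x).trans (by linarith)
      have h2 : (w - x) ^ 2 ≤ (|w| + K) ^ 2 := by
        rw [← sq_abs (w - x)]
        have := abs_nonneg (w - x)
        nlinarith
      have h3 : -(|w| + K) ^ 2 / (2 * τ ^ 2) ≤ -(w - x) ^ 2 / (2 * τ ^ 2) := by
        have hden : (0:ℝ) < 2 * τ ^ 2 := by positivity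
        exact (div_le_div_iff_of_pos_right hden).2 (by linarith)
      exact mul_le_mul_of_nonneg_left (Real.exp_le_exp.2 h3) hc.le
    have hI := integral_mono_ae (integrable_const _) (hint_g w) hlow
    rw [integral_const] at hI
    simp only [measure_univ, probReal_univ, ENNReal.toReal_one, one_smul, smul_eq_mul] at hI
    calc (0:ℝ) < c * Real.exp (-(|w| + K) ^ 2 / (2 * τ ^ 2)) := by positivity
      _ ≤ ∫ x, gg τ w x ∂ν := by simpa using hI
  -- the score and its derivative
  set q' : ℝ → ℝ := fun w =>
    ((∫ x, gg2 τ w x ∂ν) * p w - (∫ x, gg1 τ w x ∂ν) * (∫ x, gg1 τ w x ∂ν)) / p w ^ 2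
    with hq'_def
  have hqd : ∀ w, HasDerivAt (fun u => (∫ x, gg1 τ u x ∂ν) / p u) (q' w) w :=
    fun w => (hP2d w).div (hPd w) (hppos w).ne'
  have hdd : ∀ w, deriv (fun u => Real.log (p u)) w = (∫ x, gg1 τ w x ∂ν) / p w :=
    fun w => ((hPd w).log (hppos w).ne').deriv
  -- bound on the derivative of the score
  have hbound : ∀ w, ‖q' w‖ ≤ K ^ 2 / τ ^ 4 + 1 / τ ^ 2 := by
    intro w
    set Cy := ∫ x, gg τ w x ∂ν with hCy_def
    have hpw : p w = Cy := by rw [hp w, hCy_def]; rfl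
    have hCy : 0 < Cy := hpw ▸ hppos w
    -- integrability of moments
    have hxg : Integrable (fun x => x * gg τ w x) ν := by
      apply hint _ (K * c) (continuous_id.mul (gg_contx τ w))
      filter_upwards [haeK] with x hx
      rw [Real.norm_eq_abs, Pi.mul_apply, abs_mul, abs_of_pos (gg_pos hτ w x)]
      have := gg_le hτ w x
      rw [← hc_def] at this
      exact mul_le_mul hx this (gg_pos hτ w x).le hK
    have hx2g : Integrable (fun x => x ^ 2 * gg τ w x) ν := by
      apply hint _ (K ^ 2 * c) ((continuous_id.pow 2).mul (gg_contx τ w))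
      filter_upwards [haeK] with x hx
      rw [Real.norm_eq_abs, Pi.mul_apply, Pi.pow_apply, abs_mul, abs_of_pos (gg_pos hτ w x)]
      have h1 := gg_le hτ w x
      rw [← hc_def] at h1
      have h2 : |x ^ 2| ≤ K ^ 2 := by
        rw [abs_of_nonneg (sq_nonneg x)]
        nlinarith [sq_abs x, abs_nonneg x]
      exact mul_le_mul h2 h1 (gg_pos hτ w x).le (by positivity)
    set Ax := ∫ x, x * gg τ w x ∂ν with hAx_def
    set Axx := ∫ x, x ^ 2 * gg τ w x ∂ν with hAxx_def
    -- expansion of the first moment integral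
    have e1 : (∫ x, gg1 τ w x ∂ν) = (Ax - w * Cy) / τ ^ 2 := by
      have h1 : (fun x => gg1 τ w x)
          = fun x => (1 / τ ^ 2) * (x * gg τ w x) - (w / τ ^ 2) * gg τ w x := by
        funext x; unfold gg1; ring
      rw [h1, integral_sub (hxg.const_mul _) ((hint_g w).const_mul _),
        integral_const_mul, integral_const_mul, ← hAx_def, ← hCy_def]
      ring
    have e2 : (∫ x, gg2 τ w x ∂ν)
        = (w ^ 2 * Cy - 2 * w * Ax + Axx) / τ ^ 4 - Cy / τ ^ 2 := by
      have h1 : (fun x => gg2 τ w x)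
          = fun x => ((1 / τ ^ 4) * (x ^ 2 * gg τ w x) - (2 * w / τ ^ 4) * (x * gg τ w x))
            + (w ^ 2 / τ ^ 4 - 1 / τ ^ 2) * gg τ w x := by
        funext x; unfold gg2; ring
      have i1 : Integrable (fun x => (1 / τ ^ 4) * (x ^ 2 * gg τ w x)
          - (2 * w / τ ^ 4) * (x * gg τ w x)) ν := (hx2g.const_mul _).sub (hxg.const_mul _)
      rw [h1, integral_add i1 ((hint_g w).const_mul _),
        integral_sub (hx2g.const_mul _) (hxg.const_mul _),
        integral_const_mul, integral_const_mul, integral_const_mul, ← hAx_def, ← hAxx_def,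
        ← hCy_def]
      ring
    -- variance nonneg
    have hvar : 0 ≤ Axx * Cy - Ax ^ 2 := by
      set m := Ax / Cy with hm_def
      have hsqint : Integrable (fun x => (x - m) ^ 2 * gg τ w x) ν := by
        have h1 : (fun x => (x - m) ^ 2 * gg τ w x)
            = fun x => (x ^ 2 * gg τ w x - (2 * m) * (x * gg τ w x)) + m ^ 2 * gg τ w x := by
          funext x; ring
        rw [h1]
        have i2 : Integrable (fun x => x ^ 2 * gg τ w x - (2 * m) * (x * gg τ w x)) ν :=
          hx2g.sub (hxg.const_mul _)
        exact i2.add ((hint_g w).const_mul _)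
      have hIll : 0 ≤ ∫ x, (x - m) ^ 2 * gg τ w x ∂ν :=
        integral_nonneg fun x => mul_nonneg (sq_nonneg _) (gg_pos hτ w x).le
      have hexp : ∫ x, (x - m) ^ 2 * gg τ w x ∂ν = Axx - 2 * m * Ax + m ^ 2 * Cy := by
        have h1 : (fun x => (x - m) ^ 2 * gg τ w x)
            = fun x => (x ^ 2 * gg τ w x - (2 * m) * (x * gg τ w x)) + m ^ 2 * gg τ w x := by
          funext x; ring
        have i2 : Integrable (fun x => x ^ 2 * gg τ w x - (2 * m) * (x * gg τ w x)) ν :=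
          hx2g.sub (hxg.const_mul _)
        rw [h1, integral_add i2 ((hint_g w).const_mul _),
          integral_sub hx2g (hxg.const_mul _), integral_const_mul, integral_const_mul,
          ← hAx_def, ← hAxx_def, ← hCy_def]
      have h0 : 0 ≤ Axx - 2 * m * Ax + m ^ 2 * Cy := hexp ▸ hIll
      have h4 : (Axx - 2 * m * Ax + m ^ 2 * Cy) * Cy = Axx * Cy - Ax ^ 2 := by
        rw [hm_def]; field_simp; ring
      have := mul_nonneg h0 hCy.le
      rw [h4] at this
      exact this
    -- second moment bound
    have he4 : Axx ≤ K ^ 2 * Cy := by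
      have h1 : Axx ≤ ∫ x, K ^ 2 * gg τ w x ∂ν := by
        rw [hAxx_def]
        apply integral_mono_ae hx2g ((hint_g w).const_mul _)
        filter_upwards [haeK] with x hx
        have h2 : x ^ 2 ≤ K ^ 2 := by nlinarith [sq_abs x, abs_nonneg x]
        exact mul_le_mul_of_nonneg_right h2 (gg_pos hτ w x).le
      rwa [integral_const_mul, ← hCy_def] at h1
    have hVK : Axx * Cy - Ax ^ 2 ≤ K ^ 2 * Cy ^ 2 := by nlinarith [sq_nonneg Ax]
    -- numerator identity
    have hnum : (∫ x, gg2 τ w x ∂ν) * Cy - (∫ x, gg1 τ w x ∂ν) * (∫ x, gg1 τ w x ∂ν)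
        = (Axx * Cy - Ax ^ 2) / τ ^ 4 - Cy ^ 2 / τ ^ 2 := by
      rw [e1, e2]; field_simp; ring
    simp only [hq'_def, hpw]
    rw [hnum, Real.norm_eq_abs, abs_div, abs_of_pos (pow_pos hCy 2), div_le_iff₀ (pow_pos hCy 2)]
    have hid : (K ^ 2 / τ ^ 4 + 1 / τ ^ 2) * Cy ^ 2
        = K ^ 2 * Cy ^ 2 / τ ^ 4 + Cy ^ 2 / τ ^ 2 := by ring
    rw [abs_le]
    constructor
    · have l1 : 0 ≤ (Axx * Cy - Ax ^ 2) / τ ^ 4 := div_nonneg hvar hτ4.le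
      have l2 : 0 ≤ K ^ 2 * Cy ^ 2 / τ ^ 4 := by positivity
      rw [hid]; linarith
    · have u1 : (Axx * Cy - Ax ^ 2) / τ ^ 4 ≤ K ^ 2 * Cy ^ 2 / τ ^ 4 := by gcongr
      have u2 : 0 < Cy ^ 2 / τ ^ 2 := by positivity
      rw [hid]; linarith
  -- conclude via the mean value inequality
  rw [hdd y, hdd z]
  have := Convex.norm_image_sub_le_of_norm_hasDerivWithin_le
    (f := fun u => (∫ x, gg1 τ u x ∂ν) / p u) (f' := q') (s := Set.univ)
    (fun w _ => (hqd w).hasDerivWithinAt) (fun w _ => hbound w) convex_univ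
    (Set.mem_univ z) (Set.mem_univ y)
  simpa [Real.norm_eq_abs] using this
end
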